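/- arXiv:2409.02470 — 2 statements merged into one kernel-verified Lean document; each statement's English description precedes it below -/
import Mathlib

section
/- Let U be a d×d unitary matrix and ψ a rank-one projection (pure state) on ℂᵈ. Define the pseudo-density matrix of a unitary channel: R^T₁ = (1/2)(|Ψ_U⟩⟨Ψ_U|(ψ⊗I) + (ψ⊗I)|Ψ_U⟩⟨Ψ_U|), where |Ψ_U⟩ = Σᵢ |i⟩ ⊗ U|i⟩ is the unnormalized maximally entangled vector associated to U (so ⟨Ψ_U|Ψ_U⟩ = d). Then Tr((R^T₁)²) = (d+1)/2. -/
open Kronecker Matrix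

section aux
variable {n : Type*} [Fintype n] [DecidableEq n]

lemma vv_mul (a b : n → ℂ) (M : Matrix n n ℂ) :
    Matrix.vecMulVec a b * M = Matrix.vecMulVec a (Matrix.vecMul b M) := by
  ext i j
  simp [Matrix.mul_apply, Matrix.vecMulVec_apply, Matrix.vecMul, dotProduct,
    Finset.mul_sum, mul_assoc]

lemma vv_mul_vv (a b c e : n → ℂ) :
    Matrix.vecMulVec a b * Matrix.vecMulVec c e = (b ⬝ᵥ c) • Matrix.vecMulVec a e := by
  ext i j
  simp [Matrix.mul_apply, Matrix.vecMulVec_apply, dotProduct, Finset.sum_mul,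
    Finset.mul_sum]
  congr 1; ext k; ring

lemma trace_vv (a b : n → ℂ) : (Matrix.vecMulVec a b).trace = a ⬝ᵥ b := by
  simp [Matrix.trace, Matrix.vecMulVec_apply, dotProduct, Matrix.diag]

end aux

theorem stmt_6 {d : ℕ} (hd : 1 ≤ d)
    (U : Matrix (Fin d) (Fin d) ℂ) (hU : U ∈ Matrix.unitaryGroup (Fin d) ℂ)
    (φ : Fin d → ℂ) (hφ : ∑ i, Complex.normSq (φ i) = 1)
    (Ψ : Fin d × Fin d → ℂ) (hΨ : Ψ = fun p => U p.2 p.1)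
    (R : Matrix (Fin d × Fin d) (Fin d × Fin d) ℂ)
    (hR : R = ((1 : ℂ) / 2) •
        (Matrix.vecMulVec Ψ (star Ψ) * (Matrix.vecMulVec φ (star φ) ⊗ₖ 1)
          + (Matrix.vecMulVec φ (star φ) ⊗ₖ 1) * Matrix.vecMulVec Ψ (star Ψ))) :
    (R * R).trace = ((d : ℂ) + 1) / 2 := by
  have hUU : Uᴴ * U = 1 := (Matrix.mem_unitaryGroup_iff'.mp hU)
  have hUUe : ∀ i k, ∑ j, (starRingEnd ℂ) (U j i) * U j k = if i = k then 1 else 0 := by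
    intro i k
    have := congrFun (congrFun hUU i) k
    simpa [Matrix.mul_apply, Matrix.conjTranspose_apply, Matrix.one_apply] using this
  set A := Matrix.vecMulVec Ψ (star Ψ) with hA
  set P := (Matrix.vecMulVec φ (star φ) ⊗ₖ (1 : Matrix (Fin d) (Fin d) ℂ)) with hP
  -- the key scalars
  have hd' : star Ψ ⬝ᵥ Ψ = (d : ℂ) := by
    subst hΨ
    simp only [dotProduct, Pi.star_apply, RCLike.star_def]
    rw [Fintype.sum_prod_type]
    calc (∑ i, ∑ j, (starRingEnd ℂ) (U j i) * U j i)
        = ∑ i, (if i = i then (1:ℂ) else 0) := by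
          exact Finset.sum_congr rfl fun i _ => hUUe i i
      _ = (d : ℂ) := by simp
  have hc : Matrix.vecMul (star Ψ) P ⬝ᵥ Ψ = 1 := by
    subst hΨ
    simp only [dotProduct, Matrix.vecMul, dotProduct, hP,
      Matrix.kroneckerMap_apply, Matrix.vecMulVec_apply, Pi.star_apply, RCLike.star_def,
      Matrix.one_apply]
    rw [Fintype.sum_prod_type]
    have key : ∀ (k : Fin d) (j : Fin d),
        (∑ p : Fin d × Fin d, (starRingEnd ℂ) (U p.2 p.1) *
          (φ p.1 * (starRingEnd ℂ) (φ k) * if p.2 = j then 1 else 0)) * U j k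
        = (∑ i, (starRingEnd ℂ) (U j i) * φ i) * ((starRingEnd ℂ) (φ k) * U j k) := by
      intro k j
      rw [Fintype.sum_prod_type]
      simp [Finset.sum_mul, Finset.mul_sum]
      congr 1; ext i; ring
    calc (∑ k, ∑ j, (∑ p : Fin d × Fin d, (starRingEnd ℂ) (U p.2 p.1) *
            (φ p.1 * (starRingEnd ℂ) (φ k) * if p.2 = j then 1 else 0)) * U j k)
        = ∑ k, ∑ j, (∑ i, (starRingEnd ℂ) (U j i) * φ i) * ((starRingEnd ℂ) (φ k) * U j k) := by
          exact Finset.sum_congr rfl fun k _ => Finset.sum_congr rfl fun j _ => key k j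
      _ = ∑ k, ∑ i, φ i * (starRingEnd ℂ) (φ k) * (∑ j, (starRingEnd ℂ) (U j i) * U j k) := by
          refine Finset.sum_congr rfl fun k _ => ?_
          simp only [Finset.sum_mul]
          rw [Finset.sum_comm]
          refine Finset.sum_congr rfl fun i _ => ?_
          rw [Finset.mul_sum]
          refine Finset.sum_congr rfl fun j _ => ?_
          ring
      _ = ∑ k, ∑ i, φ i * (starRingEnd ℂ) (φ k) * (if i = k then 1 else 0) := by
          refine Finset.sum_congr rfl fun k _ => Finset.sum_congr rfl fun i _ => ?_
          rw [hUUe]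
      _ = ∑ k, φ k * (starRingEnd ℂ) (φ k) := by simp
      _ = 1 := by
          have : ∀ k, φ k * (starRingEnd ℂ) (φ k) = (Complex.normSq (φ k) : ℂ) := by
            intro k; rw [Complex.normSq_eq_conj_mul_self]; ring
          rw [Finset.sum_congr rfl fun k _ => this k, ← Complex.ofReal_sum, hφ,
            Complex.ofReal_one]
  -- matrix identities
  have hAP : A * P = Matrix.vecMulVec Ψ (Matrix.vecMul (star Ψ) P) := vv_mul _ _ _
  have hAPA : A * P * A = A := by
    rw [hAP, hA, vv_mul_vv, hc, one_smul]
  have htrAP : (A * P).trace = 1 := by rw [hAP, trace_vv, dotProduct_comm]; exact hc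
  have hAA : A * A = (d : ℂ) • A := by rw [hA, vv_mul_vv, hd']
  have hφ1 : star φ ⬝ᵥ φ = 1 := by
    simp only [dotProduct, Pi.star_apply, RCLike.star_def]
    have : ∀ k, (starRingEnd ℂ) (φ k) * φ k = (Complex.normSq (φ k) : ℂ) := fun k =>
      (Complex.normSq_eq_conj_mul_self).symm
    rw [Finset.sum_congr rfl fun k _ => this k, ← Complex.ofReal_sum, hφ,
      Complex.ofReal_one]
  have hPP : P * P = P := by
    rw [hP, ← Matrix.mul_kronecker_mul, Matrix.one_mul, vv_mul_vv, hφ1, one_smul]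
  have htrA : A.trace = (d : ℂ) := by rw [hA, trace_vv]; rw [dotProduct_comm]; exact hd'
  -- expand
  have hRR : R * R = ((1:ℂ)/4) • (A*P*(A*P) + A*P*(P*A) + P*A*(A*P) + P*A*(P*A)) := by
    rw [hR]
    rw [Matrix.smul_mul, Matrix.mul_smul, smul_smul]
    rw [Matrix.add_mul, Matrix.mul_add, Matrix.mul_add]
    norm_num [add_assoc]
  rw [hRR, Matrix.trace_smul]
  have t1 : (A*P*(A*P)).trace = 1 := by
    rw [show A*P*(A*P) = (A*P*A)*P by noncomm_ring, hAPA, htrAP]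
  have t2 : (A*P*(P*A)).trace = (d:ℂ) := by
    rw [show A*P*(P*A) = A*(P*P)*A by noncomm_ring, hPP,
      Matrix.trace_mul_comm, ← Matrix.mul_assoc, hAA, Matrix.smul_mul,
      Matrix.trace_smul, htrAP]
    simp
  have t3 : (P*A*(A*P)).trace = (d:ℂ) := by
    rw [show P*A*(A*P) = P*(A*A)*P by noncomm_ring, hAA]
    rw [Matrix.mul_smul, Matrix.smul_mul, Matrix.trace_smul,
      Matrix.trace_mul_comm, ← Matrix.mul_assoc, hPP, Matrix.trace_mul_comm, htrAP]
    simp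
  have t4 : (P*A*(P*A)).trace = 1 := by
    rw [show P*A*(P*A) = P*(A*P*A) by noncomm_ring, hAPA, Matrix.trace_mul_comm, htrAP]
  rw [Matrix.trace_add, Matrix.trace_add, Matrix.trace_add, t1, t2, t3, t4]
  simp only [smul_eq_mul]; ring
end

section
/- Consider the single-qubit partial replacement channel N with Kraus operators K₁ = c·I + is|0⟩⟨0| and K₂ = is|0⟩⟨1|, where c = cos θ, s = sin θ. Then N is trace preserving (K₁†K₁ + K₂†K₂ = I), and the pseudo-density matrix R = (1/2)[(ρ⊗I)Λ_N + Λ_N(ρ⊗I)] with ρ = |0⟩⟨0| satisfies Tr(R²) − 1 = c²/2. -/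
set_option maxHeartbeats 1000000

open Kronecker Matrix

theorem stmt_18 (θ : ℝ) (c s : ℝ) (hc : c = Real.cos θ) (hs : s = Real.sin θ)
    (K₁ K₂ : Matrix (Fin 2) (Fin 2) ℂ)
    (hK₁ : K₁ = (c : ℂ) • (1 : Matrix (Fin 2) (Fin 2) ℂ)
        + (Complex.I * s) • Matrix.single 0 0 1)
    (hK₂ : K₂ = (Complex.I * s) • Matrix.single 0 1 1)
    (N : Matrix (Fin 2) (Fin 2) ℂ → Matrix (Fin 2) (Fin 2) ℂ)
    (hN : N = fun X => K₁ * X * K₁ᴴ + K₂ * X * K₂ᴴ)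
    (Λ : Matrix (Fin 2 × Fin 2) (Fin 2 × Fin 2) ℂ)
    (hΛ : Λ = ∑ i, ∑ j, (Matrix.single i j (1 : ℂ)) ⊗ₖ N (Matrix.single j i 1))
    (ρ : Matrix (Fin 2) (Fin 2) ℂ) (hρ : ρ = Matrix.single 0 0 1)
    (R : Matrix (Fin 2 × Fin 2) (Fin 2 × Fin 2) ℂ)
    (hR : R = ((1 : ℂ) / 2) • ((ρ ⊗ₖ 1) * Λ + Λ * (ρ ⊗ₖ 1))) :
    K₁ᴴ * K₁ + K₂ᴴ * K₂ = 1 ∧ (R * R).trace - 1 = (c : ℂ) ^ 2 / 2 := by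
  have hcs : (c : ℂ) ^ 2 + (s : ℂ) ^ 2 = 1 := by
    rw [hc, hs]; norm_cast; exact Real.cos_sq_add_sin_sq θ
  refine ⟨?_, ?_⟩
  · subst hK₁ hK₂
    ext i j
    fin_cases i <;> fin_cases j <;>
      simp [Matrix.mul_apply, Fin.sum_univ_two, Matrix.conjTranspose_apply,
        Matrix.one_apply, Matrix.single, Complex.ext_iff] <;>
      push_cast <;> (try constructor) <;> (try rfl) <;>
      (subst hc hs; nlinarith [Real.cos_sq_add_sin_sq θ])
  · have hN00 : N (Matrix.single 0 0 1) = Matrix.single 0 0 1 := by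
      subst hN hK₁ hK₂
      ext i j
      fin_cases i <;> fin_cases j <;>
        simp [Matrix.mul_apply, Fin.sum_univ_two, Matrix.conjTranspose_apply,
          Matrix.one_apply, Matrix.single, Complex.I_sq] <;>
        (first
          | tauto
          | linear_combination hcs
          | linear_combination hcs - (s : ℂ) ^ 2 * Complex.I_sq
          | linear_combination (-(s : ℂ) ^ 2) * Complex.I_sq
          | linear_combination ((s : ℂ) ^ 2) * Complex.I_sq
          | ring)
    have hN01 : N (Matrix.single 0 1 1) =
        ((c : ℂ) * ((c : ℂ) + Complex.I * s)) • Matrix.single 0 1 1 := by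
      subst hN hK₁ hK₂
      ext i j
      fin_cases i <;> fin_cases j <;>
        simp [Matrix.mul_apply, Fin.sum_univ_two, Matrix.conjTranspose_apply,
          Matrix.one_apply, Matrix.single, Complex.I_sq] <;>
        (first
          | tauto
          | linear_combination hcs
          | linear_combination hcs - (s : ℂ) ^ 2 * Complex.I_sq
          | linear_combination (-(s : ℂ) ^ 2) * Complex.I_sq
          | linear_combination ((s : ℂ) ^ 2) * Complex.I_sq
          | ring)
    have hN10 : N (Matrix.single 1 0 1) =
        ((c : ℂ) * ((c : ℂ) - Complex.I * s)) • Matrix.single 1 0 1 := by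
      subst hN hK₁ hK₂
      ext i j
      fin_cases i <;> fin_cases j <;>
        simp [Matrix.mul_apply, Fin.sum_univ_two, Matrix.conjTranspose_apply,
          Matrix.one_apply, Matrix.single, Complex.I_sq] <;>
        (first
          | tauto
          | linear_combination hcs
          | linear_combination hcs - (s : ℂ) ^ 2 * Complex.I_sq
          | linear_combination (-(s : ℂ) ^ 2) * Complex.I_sq
          | linear_combination ((s : ℂ) ^ 2) * Complex.I_sq
          | ring)
    have hN11 : N (Matrix.single 1 1 1) =
        ((c : ℂ) ^ 2) • Matrix.single 1 1 1
          + ((s : ℂ) ^ 2) • Matrix.single 0 0 1 := by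
      subst hN hK₁ hK₂
      ext i j
      fin_cases i <;> fin_cases j <;>
        simp [Matrix.mul_apply, Fin.sum_univ_two, Matrix.conjTranspose_apply,
          Matrix.one_apply, Matrix.single, Complex.I_sq] <;>
        (first
          | tauto
          | linear_combination hcs
          | linear_combination hcs - (s : ℂ) ^ 2 * Complex.I_sq
          | linear_combination (-(s : ℂ) ^ 2) * Complex.I_sq
          | linear_combination ((s : ℂ) ^ 2) * Complex.I_sq
          | ring)
    have hΛ' : Λ = Matrix.of (fun p q : Fin 2 × Fin 2 =>
        if p = (0, 0) ∧ q = (0, 0) then 1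
        else if p = (0, 1) ∧ q = (1, 0) then (c : ℂ) * ((c : ℂ) - Complex.I * s)
        else if p = (1, 0) ∧ q = (0, 1) then (c : ℂ) * ((c : ℂ) + Complex.I * s)
        else if p = (1, 1) ∧ q = (1, 1) then (c : ℂ) ^ 2
        else if p = (1, 0) ∧ q = (1, 0) then (s : ℂ) ^ 2
        else 0) := by
      rw [hΛ, Fin.sum_univ_two]
      simp only [Fin.sum_univ_two, hN00, hN01, hN10, hN11]
      ext ⟨p1, p2⟩ ⟨q1, q2⟩
      fin_cases p1 <;> fin_cases p2 <;> fin_cases q1 <;> fin_cases q2 <;>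
        simp [Matrix.kroneckerMap_apply, Matrix.single, Prod.ext_iff] <;> ring
    have hR' : R = Matrix.of (fun p q : Fin 2 × Fin 2 =>
        if p = (0, 0) ∧ q = (0, 0) then 1
        else if p = (0, 1) ∧ q = (1, 0) then (c : ℂ) * ((c : ℂ) - Complex.I * s) / 2
        else if p = (1, 0) ∧ q = (0, 1) then (c : ℂ) * ((c : ℂ) + Complex.I * s) / 2
        else 0) := by
      rw [hR, hΛ', hρ]
      ext ⟨p1, p2⟩ ⟨q1, q2⟩
      fin_cases p1 <;> fin_cases p2 <;> fin_cases q1 <;> fin_cases q2 <;>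
        simp [Matrix.mul_apply, Fintype.sum_prod_type, Fin.sum_univ_two,
          Matrix.kroneckerMap_apply, Matrix.one_apply, Matrix.single,
          Prod.ext_iff] <;> (first
          | tauto
          | linear_combination hcs
          | linear_combination hcs - (s : ℂ) ^ 2 * Complex.I_sq
          | linear_combination (-(s : ℂ) ^ 2) * Complex.I_sq
          | linear_combination ((s : ℂ) ^ 2) * Complex.I_sq
          | ring)
    rw [hR']
    simp only [Matrix.trace, Matrix.diag, Matrix.mul_apply, Fintype.sum_prod_type,
      Fin.sum_univ_two, Matrix.of_apply]
    norm_num [Prod.ext_iff]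
    linear_combination ((c : ℂ) ^ 2 / 2) * hcs + (-(c : ℂ) ^ 2 * (s : ℂ) ^ 2 / 2) * Complex.I_sq
end
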